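/- Let Φ : ℝ^n → ℝ^n be symmetric (Φ ∘ P = P ∘ Φ for every permutation matrix P), extended by Φ(Λ) = sign(Λ) ⊙ Φ(|Λ|), and let F(X) = V_X diag(Φ(Λ_X)) U_X^* be the associated matrix-valued spectral function. Let X ∈ ℝ^{n×n} be a square matrix with n pairwise distinct singular values. Then F is differentiable at X if and only if Φ is differentiable at Λ_X, and in that case, for every direction δ ∈ ℝ^{n×n}, ∂F(X)[δ] = V_X ( 𝓜(Λ_X)[δ̄] + Γ_S(Λ_X) ⊙ 𝓟_S(δ̄) + Γ_A(Λ_X) ⊙ 𝓟_A(δ̄) ) U_X^*, where δ̄ = V_X^* δ U_X, 𝓜(Λ) = diag ∘ ∂Φ(Λ) ∘ diag, 𝓟_S(Y)_{i,j} = (Y_{i,j} + Y_{j,i})/2, 𝓟_A(Y)_{i,j} = (Y_{i,j} − Y_{j,i})/2, and writing Λ = Λ_X and Φ(Λ) = (Φ(Λ)_1,…,Φ(Λ)_n): Γ_S(Λ)_{i,j} = 0 if i = j and (Φ(Λ)_i − Φ(Λ)_j)/(Λ_i − Λ_j) if Λ_i ≠ Λ_j; Γ_A(Λ)_{i,j}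 = 0 if i = j, (Φ(Λ)_i + Φ(Λ)_j)/(Λ_i + Λ_j) if Λ_i > 0 or Λ_j > 0, and ∂Φ(Λ)_{i,i} − ∂Φ(Λ)_{i,j} otherwise. -/

import Mathlib

open Matrix

attribute [local instance] Matrix.normedAddCommGroup Matrix.normedSpace

/-- `(V, Λ, U)` is an SVD of the square matrix `X`: `V`, `U` orthogonal, `Λ` the vector
of nonnegative singular values, `X = V diag(Λ) Uᵀ`. -/
noncomputable def IsSVDsq {n : ℕ} (X V : Matrix (Fin n) (Fin n) ℝ) (Λ : Fin n → ℝ)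
    (U : Matrix (Fin n) (Fin n) ℝ) : Prop :=
  Vᵀ * V = 1 ∧ V * Vᵀ = 1 ∧ Uᵀ * U = 1 ∧ U * Uᵀ = 1 ∧ (∀ i, 0 ≤ Λ i) ∧
    X = V * Matrix.diagonal Λ * Uᵀ

/-- The `(i,j)` entry of the Jacobian `∂Φ(Λ)` of `Φ : ℝ^n → ℝ^n` at `Λ`. -/
noncomputable def jacEntry {n : ℕ} (Φ : (Fin n → ℝ) → Fin n → ℝ) (Λ : Fin n → ℝ)
    (i j : Fin n) : ℝ :=
  fderiv ℝ Φ Λ (Pi.single j 1) i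

/-- The matrix `Γ_S(Λ)`: zero on the diagonal and
`(Φ(Λ)_i − Φ(Λ)_j)/(Λ_i − Λ_j)` off the diagonal (where `Λ_i ≠ Λ_j`). -/
noncomputable def GammaS {n : ℕ} (Φ : (Fin n → ℝ) → Fin n → ℝ) (Λ : Fin n → ℝ) :
    Matrix (Fin n) (Fin n) ℝ :=
  Matrix.of fun i j => if i = j then 0 else (Φ Λ i - Φ Λ j) / (Λ i - Λ j)

/-- The matrix `Γ_A(Λ)`: zero on the diagonal, `(Φ(Λ)_i + Φ(Λ)_j)/(Λ_i + Λ_j)` if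
`Λ_i > 0` or `Λ_j > 0`, and `∂Φ(Λ)_{i,i} − ∂Φ(Λ)_{i,j}` otherwise. -/
noncomputable def GammaA {n : ℕ} (Φ : (Fin n → ℝ) → Fin n → ℝ) (Λ : Fin n → ℝ) :
    Matrix (Fin n) (Fin n) ℝ :=
  Matrix.of fun i j =>
    if i = j then 0
    else if 0 < Λ i ∨ 0 < Λ j then (Φ Λ i + Φ Λ j) / (Λ i + Λ j)
    else jacEntry Φ Λ i i - jacEntry Φ Λ i j

/-- The derivative formula
`D(X)[δ] = V_X (𝓜(Λ_X)[δ̄] + Γ_S(Λ_X) ⊙ 𝓟_S(δ̄) + Γ_A(Λ_X) ⊙ 𝓟_A(δ̄)) U_Xᵀ` of a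
matrix-valued spectral function, where `δ̄ = V_Xᵀ δ U_X`,
`𝓜(Λ)[Y] = diag(∂Φ(Λ)[diag Y])`, `𝓟_S(Y)_{i,j} = (Y_{i,j} + Y_{j,i})/2` and
`𝓟_A(Y)_{i,j} = (Y_{i,j} − Y_{j,i})/2`. -/
noncomputable def Dformula {n : ℕ} (Φ : (Fin n → ℝ) → Fin n → ℝ)
    (V : Matrix (Fin n) (Fin n) ℝ) (Λ : Fin n → ℝ) (U : Matrix (Fin n) (Fin n) ℝ)
    (δ : Matrix (Fin n) (Fin n) ℝ) : Matrix (Fin n) (Fin n) ℝ :=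
  let δb := Vᵀ * δ * U
  V * (Matrix.diagonal (fderiv ℝ Φ Λ (fun k => δb k k)) +
        Matrix.of (fun i j =>
          GammaS Φ Λ i j * ((δb i j + δb j i) / 2) +
          GammaA Φ Λ i j * ((δb i j - δb j i) / 2))) * Uᵀ


namespace MSFDaux

open scoped ContDiff

variable {n : ℕ} {E : Type*} [NormedAddCommGroup E] [NormedSpace ℝ E]

abbrev Mat (n : ℕ) := Matrix (Fin n) (Fin n) ℝ


open scoped ContDiff



noncomputable def entryL (i j : Fin n) : Mat n →L[ℝ] ℝ :=
  LinearMap.toContinuousLinearMap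
    { toFun := fun Y => Y i j
      map_add' := fun _ _ => rfl
      map_smul' := fun _ _ => rfl }

@[simp] theorem entryL_apply (i j : Fin n) (Y : Mat n) : entryL i j Y = Y i j := rfl

noncomputable def mulB : Mat n →L[ℝ] Mat n →L[ℝ] Mat n :=
  LinearMap.toContinuousLinearMap
    { toFun := fun A => LinearMap.toContinuousLinearMap
        { toFun := fun B => A * B
          map_add' := fun B C => mul_add A B C
          map_smul' := fun c B => by simpa using (mul_smul_comm c A B).symm }
      map_add' := fun A A' => ContinuousLinearMap.ext fun B => by simpa using add_mul A A' B
      map_smul' := fun c A => ContinuousLinearMap.ext fun B => by simpa using smul_mul_assoc c A B }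

@[simp] theorem mulB_apply (A B : Mat n) : mulB A B = A * B := rfl

noncomputable def dvecL : Mat n →L[ℝ] (Fin n → ℝ) :=
  LinearMap.toContinuousLinearMap
    { toFun := fun Y i => Y i i
      map_add' := fun _ _ => rfl
      map_smul' := fun _ _ => rfl }

@[simp] theorem dvecL_apply (Y : Mat n) (i : Fin n) : dvecL Y i = Y i i := rfl

noncomputable def diagL : (Fin n → ℝ) →L[ℝ] Mat n :=
  LinearMap.toContinuousLinearMap
    { toFun := Matrix.diagonal
      map_add' := fun a b => (Matrix.diagonal_add a b).symm
      map_smul' := fun c a => by simpa using (Matrix.diagonal_smul c a).symm }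

@[simp] theorem diagL_apply (v : Fin n → ℝ) : diagL v = Matrix.diagonal v := by rfl

noncomputable def trL : Mat n →L[ℝ] Mat n :=
  LinearMap.toContinuousLinearMap
    { toFun := Matrix.transpose
      map_add' := fun a b => Matrix.transpose_add a b
      map_smul' := fun c a => by simpa using Matrix.transpose_smul c a }

@[simp] theorem trL_apply (Y : Mat n) : trL Y = Yᵀ := rfl


open scoped ContDiff



noncomputable def amatL (Λ : Fin n → ℝ) : Mat n →L[ℝ] Mat n :=
  LinearMap.toContinuousLinearMap
    { toFun := fun Y => Matrix.of fun i j =>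
        if i = j then 0 else (Λ j * Y i j + Λ i * Y j i) / (Λ j ^ 2 - Λ i ^ 2)
      map_add' := fun Y Z => by
        ext i j
        by_cases h : i = j <;> simp [h, Matrix.add_apply] <;> ring
      map_smul' := fun c Y => by
        ext i j
        by_cases h : i = j <;> simp [h, Matrix.smul_apply, smul_eq_mul] <;> ring }

noncomputable def bmatL (Λ : Fin n → ℝ) : Mat n →L[ℝ] Mat n :=
  LinearMap.toContinuousLinearMap
    { toFun := fun Y => Matrix.of fun i j =>
        if i = j then 0 else (Λ i * Y i j + Λ j * Y j i) / (Λ j ^ 2 - Λ i ^ 2)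
      map_add' := fun Y Z => by
        ext i j
        by_cases h : i = j <;> simp [h, Matrix.add_apply] <;> ring
      map_smul' := fun c Y => by
        ext i j
        by_cases h : i = j <;> simp [h, Matrix.smul_apply, smul_eq_mul] <;> ring }

theorem amatL_apply (Λ : Fin n → ℝ) (Y : Mat n) (i j : Fin n) :
    amatL Λ Y i j = if i = j then 0 else (Λ j * Y i j + Λ i * Y j i) / (Λ j ^ 2 - Λ i ^ 2) := rfl

theorem bmatL_apply (Λ : Fin n → ℝ) (Y : Mat n) (i j : Fin n) :
    bmatL Λ Y i j = if i = j then 0 else (Λ i * Y i j + Λ j * Y j i) / (Λ j ^ 2 - Λ i ^ 2) := rfl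

theorem amatL_skew (Λ : Fin n → ℝ) (Y : Mat n) : (amatL Λ Y)ᵀ = -(amatL Λ Y) := by
  ext i j
  rw [Matrix.transpose_apply, Matrix.neg_apply, amatL_apply, amatL_apply]
  by_cases h : i = j
  · simp [h]
  · rw [if_neg (Ne.symm h), if_neg h]
    rw [show Λ i ^ 2 - Λ j ^ 2 = -(Λ j ^ 2 - Λ i ^ 2) by ring, div_neg]
    ring_nf
theorem bmatL_skew (Λ : Fin n → ℝ) (Y : Mat n) : (bmatL Λ Y)ᵀ = -(bmatL Λ Y) := by
  ext i j
  rw [Matrix.transpose_apply, Matrix.neg_apply, bmatL_apply, bmatL_apply]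
  by_cases h : i = j
  · simp [h]
  · rw [if_neg (Ne.symm h), if_neg h]
    rw [show Λ i ^ 2 - Λ j ^ 2 = -(Λ j ^ 2 - Λ i ^ 2) by ring, div_neg]
    ring_nf

/-- Cayley-type transform, with derivative `id` at `0`. -/
noncomputable def cay (S : Mat n) : Mat n :=
  (1 + (2⁻¹ : ℝ) • S) * (1 - (2⁻¹ : ℝ) • S)⁻¹

theorem inv_one' : ((1 : Mat n))⁻¹ = 1 := Matrix.inv_eq_left_inv (by simp)

theorem cay_zero : cay (0 : Mat n) = 1 := by
  simp [cay, inv_one']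

theorem det_one_sub_skew (S : Mat n) (hS : Sᵀ = -S) : (1 - S).det ≠ 0 := by
  intro h
  obtain ⟨v, hv, hmul⟩ := (Matrix.exists_mulVec_eq_zero_iff).2 h
  have hv1 : v = S.mulVec v := by
    have h2 := hmul
    rw [Matrix.sub_mulVec, Matrix.one_mulVec, sub_eq_zero] at h2
    exact h2
  have hskew : v ⬝ᵥ S.mulVec v = -(v ⬝ᵥ S.mulVec v) := by
    calc v ⬝ᵥ S.mulVec v = Matrix.vecMul v S ⬝ᵥ v := Matrix.dotProduct_mulVec v S v
    _ = Matrix.vecMul v (Sᵀᵀ) ⬝ᵥ v := by rw [Matrix.transpose_transpose]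
    _ = Matrix.mulVec Sᵀ v ⬝ᵥ v := by rw [Matrix.vecMul_transpose]
    _ = -(S.mulVec v ⬝ᵥ v) := by rw [hS]; simp [Matrix.neg_mulVec]
    _ = -(v ⬝ᵥ S.mulVec v) := by rw [dotProduct_comm]
  have hzero : v ⬝ᵥ S.mulVec v = 0 := by linarith [hskew]
  have hvv : v ⬝ᵥ v = 0 := by nth_rewrite 2 [hv1]; exact hzero
  exact hv (dotProduct_self_eq_zero.mp hvv)

theorem cay_orth {S : Mat n} (hS : Sᵀ = -S) :
    (cay S)ᵀ * cay S = 1 ∧ cay S * (cay S)ᵀ = 1 := by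
  set P : Mat n := 1 + (2⁻¹ : ℝ) • S with hP
  set N : Mat n := 1 - (2⁻¹ : ℝ) • S with hN
  have hskewhalf : ((2⁻¹ : ℝ) • S)ᵀ = -((2⁻¹ : ℝ) • S) := by
    rw [Matrix.transpose_smul, hS, smul_neg]
  have hNdet : N.det ≠ 0 := det_one_sub_skew _ hskewhalf
  have hPdet : P.det ≠ 0 := by
    have : P = 1 - (-((2⁻¹ : ℝ) • S)) := by rw [hP, sub_neg_eq_add]
    rw [this]
    exact det_one_sub_skew _ (by rw [Matrix.transpose_neg, hskewhalf, neg_neg])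
  have hNu : IsUnit N.det := isUnit_iff_ne_zero.2 hNdet
  have hPu : IsUnit P.det := isUnit_iff_ne_zero.2 hPdet
  have hNT : Nᵀ = P := by rw [hN, hP, Matrix.transpose_sub, Matrix.transpose_one, hskewhalf, sub_neg_eq_add]
  have hPT : Pᵀ = N := by rw [hN, hP, Matrix.transpose_add, Matrix.transpose_one, hskewhalf, ← sub_eq_add_neg]
  have hcomm : N * P = P * N := by
    rw [hN, hP]
    simp only [mul_add, add_mul, sub_mul, mul_sub, one_mul, mul_one]
    abel
  have hcayT : (cay S)ᵀ = P⁻¹ * N := by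
    rw [cay, ← hP, ← hN, Matrix.transpose_mul, Matrix.transpose_nonsing_inv, hNT, hPT]
  have h1 : (cay S)ᵀ * cay S = 1 := by
    rw [hcayT, cay, ← hP, ← hN]
    calc P⁻¹ * N * (P * N⁻¹) = P⁻¹ * (N * P) * N⁻¹ := by rw [Matrix.mul_assoc, Matrix.mul_assoc, Matrix.mul_assoc]
    _ = P⁻¹ * (P * N) * N⁻¹ := by rw [hcomm]
    _ = (P⁻¹ * P) * (N * N⁻¹) := by rw [Matrix.mul_assoc, Matrix.mul_assoc, Matrix.mul_assoc]
    _ = 1 := by rw [Matrix.nonsing_inv_mul _ hPu, Matrix.mul_nonsing_inv _ hNu, Matrix.one_mul]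
  exact ⟨h1, mul_eq_one_comm.mp h1⟩


open scoped ContDiff



theorem contDiffAt_entry {f : E → Mat n} {x : E} (hf : ContDiffAt ℝ ∞ f x) (i j : Fin n) :
    ContDiffAt ℝ ∞ (fun y => f y i j) x :=
  (entryL i j).contDiff.contDiffAt.comp x hf

theorem contDiffAt_matrixEntries {f : E → Mat n} {x : E}
    (h : ∀ i j, ContDiffAt ℝ ∞ (fun y => f y i j) x) : ContDiffAt ℝ ∞ f x := by
  have hrepr : f = fun y => ∑ i : Fin n, ∑ j : Fin n, f y i j • Matrix.single i j (1 : ℝ) := by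
    funext y
    conv_lhs => rw [Matrix.matrix_eq_sum_single (f y)]
    refine Finset.sum_congr rfl fun i _ => Finset.sum_congr rfl fun j _ => ?_
    rw [Matrix.smul_single, smul_eq_mul, mul_one]
  rw [hrepr]
  exact ContDiffAt.sum fun i _ => ContDiffAt.sum fun j _ => (h i j).smul contDiffAt_const

theorem contDiff_det : ContDiff ℝ ∞ (fun Y : Mat n => Y.det) := by
  have : (fun Y : Mat n => Y.det) =
      fun Y => ∑ σ : Equiv.Perm (Fin n), ((Equiv.Perm.sign σ : ℤ) : ℝ) * ∏ i, Y (σ i) i :=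
    funext fun Y => Matrix.det_apply' Y
  rw [this]
  exact ContDiff.sum fun σ _ =>
    contDiff_const.mul (contDiff_prod fun i _ => (entryL (σ i) i).contDiff)

theorem contDiffAt_matrix_inv {f : E → Mat n} {x : E} (hf : ContDiffAt ℝ ∞ f x)
    (hdet : (f x).det ≠ 0) : ContDiffAt ℝ ∞ (fun y => (f y)⁻¹) x := by
  apply contDiffAt_matrixEntries
  intro i j
  have hrepr : (fun y => (f y)⁻¹ i j) =
      fun y => ((f y).det)⁻¹ * ((f y).updateRow j (Pi.single i 1)).det := by
    funext y
    rw [Matrix.inv_def]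
    simp [Matrix.smul_apply, Ring.inverse_eq_inv', Matrix.adjugate_apply, smul_eq_mul]
  rw [hrepr]
  refine ContDiffAt.mul (ContDiffAt.inv (contDiff_det.contDiffAt.comp x hf) hdet) ?_
  refine contDiff_det.contDiffAt.comp x (contDiffAt_matrixEntries fun k l => ?_)
  have : (fun y => (f y).updateRow j (Pi.single i 1) k l) =
      fun y => if k = j then (Pi.single i 1 : Fin n → ℝ) l else f y k l := by
    funext y; rw [Matrix.updateRow_apply]
  rw [this]
  split_ifs
  · exact contDiffAt_const
  · exact contDiffAt_entry hf k l

theorem contDiffAt_matmul {f g : E → Mat n} {x : E} (hf : ContDiffAt ℝ ∞ f x)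
    (hg : ContDiffAt ℝ ∞ g x) : ContDiffAt ℝ ∞ (fun y => f y * g y) x := by
  apply contDiffAt_matrixEntries
  intro i j
  have : (fun y => (f y * g y) i j) = fun y => ∑ k, f y i k * g y k j := by
    funext y; rw [Matrix.mul_apply]
  rw [this]
  exact ContDiffAt.sum fun k _ => (contDiffAt_entry hf i k).mul (contDiffAt_entry hg k j)

open scoped ContDiff

theorem hasFDerivAt_matmul {f g : E → Mat n} {f' g' : E →L[ℝ] Mat n} {x : E}
    (hf : HasFDerivAt f f' x) (hg : HasFDerivAt g g' x) :
    HasFDerivAt (fun y => f y * g y)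
      (HAdd.hAdd (α := E →L[ℝ] Mat n) (β := E →L[ℝ] Mat n) ((mulB.flip (g x)).comp f') ((mulB (f x)).comp g')) x := by
  have hb : IsBoundedBilinearMap ℝ (fun p : Mat n × Mat n => mulB p.1 p.2) :=
    mulB.isBoundedBilinearMap
  have h := (hb.hasFDerivAt (f x, g x)).comp x (hf.prodMk hg)
  have heq : (hb.deriv (f x, g x)).comp (f'.prod g') =
      HAdd.hAdd (α := E →L[ℝ] Mat n) (β := E →L[ℝ] Mat n) ((mulB.flip (g x)).comp f') ((mulB (f x)).comp g') := by
    refine ContinuousLinearMap.ext fun w => ?_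
    simp only [ContinuousLinearMap.comp_apply, ContinuousLinearMap.add_apply,
      ContinuousLinearMap.prod_apply, IsBoundedBilinearMap.deriv_apply,
      ContinuousLinearMap.flip_apply, mulB_apply]
    exact add_comm _ _
  rw [← heq]
  exact h

theorem contDiffAt_cayN : ContDiffAt ℝ ∞ (fun S : Mat n => (1 - (2⁻¹ : ℝ) • S)⁻¹) 0 := by
  refine contDiffAt_matrix_inv (x := (0 : Mat n)) ?_ (by simp)
  exact (contDiff_const.sub (contDiff_id.const_smul _)).contDiffAt

theorem contDiffAt_cay : ContDiffAt ℝ ∞ (cay : Mat n → Mat n) 0 := by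
  have h1 : ContDiffAt ℝ ∞ (fun S : Mat n => 1 + (2⁻¹ : ℝ) • S) 0 :=
    (contDiff_const.add (contDiff_id.const_smul _)).contDiffAt
  exact contDiffAt_matmul h1 contDiffAt_cayN

theorem hasFDerivAt_cayN :
    HasFDerivAt (fun S : Mat n => (1 - (2⁻¹ : ℝ) • S)⁻¹)
      ((2⁻¹ : ℝ) • ContinuousLinearMap.id ℝ (Mat n)) 0 := by
  have hdiff : DifferentiableAt ℝ (fun S : Mat n => (1 - (2⁻¹ : ℝ) • S)⁻¹) 0 :=
    contDiffAt_cayN.differentiableAt (by simp)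
  have hJ := hdiff.hasFDerivAt
  have hN : HasFDerivAt (fun S : Mat n => 1 - (2⁻¹ : ℝ) • S)
      (-((2⁻¹ : ℝ) • ContinuousLinearMap.id ℝ (Mat n))) 0 :=
    ((hasFDerivAt_id (0 : Mat n)).const_smul ((2⁻¹ : ℝ))).const_sub 1
  have hev : ∀ᶠ S in nhds (0 : Mat n),
      (1 - (2⁻¹ : ℝ) • S) * (1 - (2⁻¹ : ℝ) • S)⁻¹ = 1 := by
    have hc : ContinuousAt (fun S : Mat n => (1 - (2⁻¹ : ℝ) • S).det) 0 :=
      (contDiff_det.comp (contDiff_const.sub (contDiff_id.const_smul _))).continuous.continuousAt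
    have hne : (fun S : Mat n => (1 - (2⁻¹ : ℝ) • S).det) 0 ≠ 0 := by simp
    filter_upwards [hc.eventually_ne hne] with S hS
    exact Matrix.mul_nonsing_inv _ (isUnit_iff_ne_zero.2 hS)
  have hprod := hasFDerivAt_matmul hN hJ
  have hconst : HasFDerivAt (fun S : Mat n =>
      (1 - (2⁻¹ : ℝ) • S) * (1 - (2⁻¹ : ℝ) • S)⁻¹) (0 : Mat n →L[ℝ] Mat n) 0 :=
    (hasFDerivAt_const (1 : Mat n) (0 : Mat n)).congr_of_eventuallyEq hev
  have hDzero := hprod.unique hconst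
  have hval : ∀ w : Mat n,
      fderiv ℝ (fun S : Mat n => (1 - (2⁻¹ : ℝ) • S)⁻¹) 0 w = (2⁻¹ : ℝ) • w := by
    intro w
    have h : -((2⁻¹ : ℝ) • w) * (1 - (2⁻¹ : ℝ) • (0 : Mat n))⁻¹ +
        (1 - (2⁻¹ : ℝ) • (0 : Mat n)) * fderiv ℝ (fun S : Mat n => (1 - (2⁻¹ : ℝ) • S)⁻¹) 0 w = 0 :=
      congrFun (congrArg DFunLike.coe hDzero) w
    rw [smul_zero, sub_zero, inv_one', mul_one, one_mul, neg_add_eq_zero] at h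
    exact h.symm
  have : fderiv ℝ (fun S : Mat n => (1 - (2⁻¹ : ℝ) • S)⁻¹) 0
      = (2⁻¹ : ℝ) • ContinuousLinearMap.id ℝ (Mat n) := by
    refine ContinuousLinearMap.ext fun w => ?_
    rw [hval w]
    simp
  rwa [this] at hJ

theorem hasFDerivAt_cay :
    HasFDerivAt (cay : Mat n → Mat n) (ContinuousLinearMap.id ℝ (Mat n)) 0 := by
  have hP : HasFDerivAt (fun S : Mat n => 1 + (2⁻¹ : ℝ) • S)
      ((2⁻¹ : ℝ) • ContinuousLinearMap.id ℝ (Mat n)) 0 :=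
    ((hasFDerivAt_id (0 : Mat n)).const_smul ((2⁻¹ : ℝ))).const_add 1
  have h := hasFDerivAt_matmul hP hasFDerivAt_cayN
  have heq : HAdd.hAdd (α := Mat n →L[ℝ] Mat n) (β := Mat n →L[ℝ] Mat n)
      ((mulB.flip ((fun S : Mat n => (1 - (2⁻¹ : ℝ) • S)⁻¹) 0)).comp
        ((2⁻¹ : ℝ) • ContinuousLinearMap.id ℝ (Mat n)))
      ((mulB ((fun S : Mat n => 1 + (2⁻¹ : ℝ) • S) 0)).comp
        ((2⁻¹ : ℝ) • ContinuousLinearMap.id ℝ (Mat n)))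
      = ContinuousLinearMap.id ℝ (Mat n) := by
    refine ContinuousLinearMap.ext fun w => ?_
    show (2⁻¹ : ℝ) • w * (1 - (2⁻¹ : ℝ) • (0 : Mat n))⁻¹ + (1 + (2⁻¹ : ℝ) • (0 : Mat n)) * ((2⁻¹ : ℝ) • w) = w
    simp only [smul_zero, sub_zero, add_zero, inv_one', mul_one, one_mul]
    rw [← add_smul]; norm_num
  exact h.congr_fderiv heq
open scoped ContDiff

/-- The common shape of `Ψ` and `G`. -/
noncomputable def PsiMap (Λ : Fin n → ℝ) (g : (Fin n → ℝ) → Fin n → ℝ) : Mat n → Mat n :=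
  fun Y => cay (amatL Λ Y) * Matrix.diagonal (g (Λ + dvecL Y)) * (cay (bmatL Λ Y))ᵀ

/-- The derivative of `PsiMap Λ g` at `0`. -/
noncomputable def Dclean (Λ : Fin n → ℝ) (φ0 : Fin n → ℝ)
    (g' : (Fin n → ℝ) →L[ℝ] (Fin n → ℝ)) : Mat n →L[ℝ] Mat n :=
  HAdd.hAdd (α := Mat n →L[ℝ] Mat n) (β := Mat n →L[ℝ] Mat n)
    (HAdd.hAdd (α := Mat n →L[ℝ] Mat n) (β := Mat n →L[ℝ] Mat n)
      ((mulB.flip (Matrix.diagonal φ0)).comp (amatL Λ)) (diagL.comp (g'.comp dvecL)))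
    ((mulB (Matrix.diagonal φ0)).comp (trL.comp (bmatL Λ)))

theorem Dclean_apply (Λ φ0 : Fin n → ℝ) (g' : (Fin n → ℝ) →L[ℝ] (Fin n → ℝ)) (w : Mat n) :
    Dclean Λ φ0 g' w = amatL Λ w * Matrix.diagonal φ0 +
      Matrix.diagonal (g' (dvecL w)) + Matrix.diagonal φ0 * (bmatL Λ w)ᵀ := by
  rfl

theorem hasFDerivAt_cayA (L : Mat n →L[ℝ] Mat n) :
    HasFDerivAt (fun Y : Mat n => cay (L Y)) L 0 := by
  have h0 : HasFDerivAt cay (ContinuousLinearMap.id ℝ (Mat n)) (L 0) := by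
    rw [map_zero]; exact hasFDerivAt_cay
  have h := h0.comp (0 : Mat n) L.hasFDerivAt
  simp [Function.comp_def] at h; exact h

theorem contDiffAt_cayA (L : Mat n →L[ℝ] Mat n) :
    ContDiffAt ℝ ∞ (fun Y : Mat n => cay (L Y)) 0 := by
  have h0 : ContDiffAt ℝ ∞ cay (L 0) := by rw [map_zero]; exact contDiffAt_cay
  have h := h0.comp (0 : Mat n) L.contDiff.contDiffAt
  simpa [Function.comp_def] using h

theorem hasFDerivAt_psiMap (Λ : Fin n → ℝ) {g : (Fin n → ℝ) → Fin n → ℝ}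
    {g' : (Fin n → ℝ) →L[ℝ] (Fin n → ℝ)} (hg : HasFDerivAt g g' Λ) :
    HasFDerivAt (PsiMap Λ g) (Dclean Λ (g Λ) g') 0 := by
  have hc1 : HasFDerivAt (fun Y : Mat n => cay (amatL Λ Y)) (amatL Λ) 0 := hasFDerivAt_cayA _
  have haff : HasFDerivAt (fun Y : Mat n => Λ + dvecL Y) dvecL 0 :=
    dvecL.hasFDerivAt.const_add Λ
  have hgat : HasFDerivAt g g' ((fun Y : Mat n => Λ + dvecL Y) 0) := by
    simpa using hg
  have hmid : HasFDerivAt (fun Y : Mat n => Matrix.diagonal (g (Λ + dvecL Y)))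
      (diagL.comp (g'.comp dvecL)) 0 := by
    have h1 := hgat.comp (0 : Mat n) haff
    have h2 := diagL.hasFDerivAt.comp (0 : Mat n) h1
    simp [Function.comp_def] at h2; exact h2
  have hc2t : HasFDerivAt (fun Y : Mat n => (cay (bmatL Λ Y))ᵀ) (trL.comp (bmatL Λ)) 0 := by
    have h := trL.hasFDerivAt.comp (0 : Mat n) (hasFDerivAt_cayA (bmatL Λ))
    simp [Function.comp_def] at h; exact h
  have hM1 := hasFDerivAt_matmul hc1 hmid
  have hM2 := hasFDerivAt_matmul hM1 hc2t
  have heq : HAdd.hAdd (α := Mat n →L[ℝ] Mat n) (β := Mat n →L[ℝ] Mat n)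
        ((mulB.flip ((fun Y : Mat n => (cay (bmatL Λ Y))ᵀ) 0)).comp
        (HAdd.hAdd (α := Mat n →L[ℝ] Mat n) (β := Mat n →L[ℝ] Mat n)
          ((mulB.flip ((fun Y : Mat n => Matrix.diagonal (g (Λ + dvecL Y))) 0)).comp (amatL Λ))
          ((mulB ((fun Y : Mat n => cay (amatL Λ Y)) 0)).comp (diagL.comp (g'.comp dvecL)))))
        ((mulB ((fun Y : Mat n => cay (amatL Λ Y) * Matrix.diagonal (g (Λ + dvecL Y))) 0)).comp
          (trL.comp (bmatL Λ))) = Dclean Λ (g Λ) g' := by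
    refine ContinuousLinearMap.ext fun w => ?_
    show (amatL Λ w * Matrix.diagonal (g (Λ + dvecL 0)) +
        cay (amatL Λ 0) * Matrix.diagonal (g' (dvecL w))) * (cay (bmatL Λ 0))ᵀ +
        cay (amatL Λ 0) * Matrix.diagonal (g (Λ + dvecL 0)) * (bmatL Λ w)ᵀ = _
    rw [Dclean_apply]
    simp [Dclean, map_zero, cay_zero, Matrix.transpose_one, Matrix.mul_one, Matrix.one_mul,
      add_zero]
  exact hM2.congr_fderiv heq

theorem contDiffAt_psiMap_id (Λ : Fin n → ℝ) : ContDiffAt ℝ ∞ (PsiMap Λ id) 0 := by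
  refine contDiffAt_matmul (contDiffAt_matmul (contDiffAt_cayA _) ?_) ?_
  · have h : ContDiffAt ℝ ∞ (fun Y : Mat n => diagL (Λ + dvecL Y)) 0 :=
      (diagL.contDiff.comp (contDiff_const.add dvecL.contDiff)).contDiffAt
    simpa using h
  · have h : ContDiffAt ℝ ∞ (fun Y : Mat n => trL (cay (bmatL Λ Y))) 0 :=
      (trL.contDiff.contDiffAt.comp 0 (contDiffAt_cayA _))
    simpa using h


noncomputable def conjCLE (V U : Mat n) (hV1 : Vᵀ * V = 1) (hV2 : V * Vᵀ = 1)
    (hU1 : Uᵀ * U = 1) (hU2 : U * Uᵀ = 1) : Mat n ≃L[ℝ] Mat n :=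
  LinearEquiv.toContinuousLinearEquiv
    { toFun := fun M => V * M * Uᵀ
      invFun := fun M => Vᵀ * M * U
      map_add' := fun M N => by show V * (M + N) * Uᵀ = V * M * Uᵀ + V * N * Uᵀ; rw [Matrix.mul_add, Matrix.add_mul]
      map_smul' := fun c M => by simp [Matrix.mul_smul, Matrix.smul_mul]
      left_inv := fun M => by
        simp only [Matrix.mul_assoc, hU1, Matrix.mul_one]
        rw [← Matrix.mul_assoc, hV1, Matrix.one_mul]
      right_inv := fun M => by
        simp only [Matrix.mul_assoc, hU2, Matrix.mul_one]
        rw [← Matrix.mul_assoc, hV2, Matrix.one_mul] }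

theorem conjCLE_apply (V U : Mat n) (h1 h2 h3 h4) (M : Mat n) :
    conjCLE V U h1 h2 h3 h4 M = V * M * Uᵀ := rfl

theorem conjCLE_symm_apply (V U : Mat n) (h1 h2 h3 h4) (M : Mat n) :
    (conjCLE V U h1 h2 h3 h4).symm M = Vᵀ * M * U := rfl

section inner
variable {Λ : Fin n → ℝ}

theorem hsum' (hdist : ∀ i j : Fin n, i ≠ j → Λ i ≠ Λ j) (hΛ0 : ∀ i, 0 ≤ Λ i)
    (i j : Fin n) (hij : i ≠ j) : Λ i + Λ j ≠ 0 := by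
  intro h0
  have hi := hΛ0 i; have hj := hΛ0 j
  have h1 : Λ i = 0 := by linarith
  have h2 : Λ j = 0 := by linarith
  exact hdist i j hij (by rw [h1, h2])

theorem hden' (hdist : ∀ i j : Fin n, i ≠ j → Λ i ≠ Λ j) (hΛ0 : ∀ i, 0 ≤ Λ i)
    (i j : Fin n) (hij : i ≠ j) : Λ j ^ 2 - Λ i ^ 2 ≠ 0 := by
  have h1 : Λ j - Λ i ≠ 0 := sub_ne_zero.2 (hdist j i hij.symm)
  have h2 : Λ j + Λ i ≠ 0 := hsum' hdist hΛ0 j i hij.symm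
  have h3 : Λ j ^ 2 - Λ i ^ 2 = (Λ j - Λ i) * (Λ j + Λ i) := by ring
  rw [h3]; exact mul_ne_zero h1 h2

theorem inner_psi (hdist : ∀ i j : Fin n, i ≠ j → Λ i ≠ Λ j) (hΛ0 : ∀ i, 0 ≤ Λ i)
    (w : Mat n) :
    amatL Λ w * Matrix.diagonal Λ + Matrix.diagonal (dvecL w) +
      Matrix.diagonal Λ * (bmatL Λ w)ᵀ = w := by
  ext i j
  rw [Matrix.add_apply, Matrix.add_apply, Matrix.mul_diagonal, Matrix.diagonal_mul,
    Matrix.transpose_apply, Matrix.diagonal_apply, amatL_apply, bmatL_apply]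
  by_cases h : i = j
  · subst h; simp
  · rw [if_neg h, if_neg h, if_neg (Ne.symm h)]
    rw [show Λ i ^ 2 - Λ j ^ 2 = -(Λ j ^ 2 - Λ i ^ 2) from by ring, div_neg]
    field_simp [hden' hdist hΛ0 i j h]
    ring

theorem inner_G (hdist : ∀ i j : Fin n, i ≠ j → Λ i ≠ Λ j) (hΛ0 : ∀ i, 0 ≤ Λ i)
    (Φ : (Fin n → ℝ) → Fin n → ℝ) (ψ : Fin n → ℝ) (δb : Mat n) :
    amatL Λ δb * Matrix.diagonal (Φ Λ) + Matrix.diagonal ψ +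
      Matrix.diagonal (Φ Λ) * (bmatL Λ δb)ᵀ =
    Matrix.diagonal ψ + Matrix.of (fun i j =>
      GammaS Φ Λ i j * ((δb i j + δb j i) / 2) +
      GammaA Φ Λ i j * ((δb i j - δb j i) / 2)) := by
  ext i j
  rw [Matrix.add_apply, Matrix.add_apply, Matrix.add_apply, Matrix.mul_diagonal,
    Matrix.diagonal_mul, Matrix.transpose_apply, amatL_apply, bmatL_apply, Matrix.of_apply]
  by_cases h : i = j
  · subst h; simp [GammaS, GammaA]
  · rw [if_neg h, if_neg (Ne.symm h)]
    have hpos : 0 < Λ i ∨ 0 < Λ j := by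
      by_contra hc
      push_neg at hc
      have h1 : Λ i = 0 := le_antisymm hc.1 (hΛ0 i)
      have h2 : Λ j = 0 := le_antisymm hc.2 (hΛ0 j)
      exact hdist i j h (by rw [h1, h2])
    have hGS : GammaS Φ Λ i j = (Φ Λ i - Φ Λ j) / (Λ i - Λ j) := by
      simp [GammaS, if_neg h]
    have hGA : GammaA Φ Λ i j = (Φ Λ i + Φ Λ j) / (Λ i + Λ j) := by
      simp [GammaA, if_neg h, hpos]
    rw [hGS, hGA, Matrix.diagonal_apply_ne _ h]
    rw [show Λ i ^ 2 - Λ j ^ 2 = -(Λ j ^ 2 - Λ i ^ 2) from by ring, div_neg]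
    field_simp [hden' hdist hΛ0 i j h, sub_ne_zero.2 (hdist i j h), hsum' hdist hΛ0 i j h]
    ring
end inner
end MSFDaux

namespace MSFDaux
variable {n : ℕ}


variable {n : ℕ}

theorem F_formula {Φ : (Fin n → ℝ) → Fin n → ℝ}
    (hext : ∀ Λ : Fin n → ℝ, Φ Λ = fun i => Real.sign (Λ i) * Φ (fun j => |Λ j|) i)
    {F : Mat n → Mat n}
    (hF : ∀ Z V' Λ' U', IsSVDsq Z V' Λ' U' → F Z = V' * Matrix.diagonal (Φ Λ') * U'ᵀ)
    {V' U' : Mat n} (hV1 : V'ᵀ * V' = 1) (hV2 : V' * V'ᵀ = 1) (hU1 : U'ᵀ * U' = 1)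
    (hU2 : U' * U'ᵀ = 1) (ν : Fin n → ℝ) :
    F (V' * Matrix.diagonal ν * U'ᵀ) = V' * Matrix.diagonal (Φ ν) * U'ᵀ := by
  classical
  set d : Fin n → ℝ := fun i => if ν i < 0 then -1 else 1 with hd
  have hdd : ∀ i, d i * d i = 1 := fun i => by by_cases h : ν i < 0 <;> simp [hd, h]
  have hDD : Matrix.diagonal d * Matrix.diagonal d = 1 := by
    rw [Matrix.diagonal_mul_diagonal, ← Matrix.diagonal_one]
    exact congrArg Matrix.diagonal (funext hdd)
  have habs : ∀ i, d i * |ν i| = ν i := fun i => by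
    rcases lt_trichotomy (ν i) 0 with h | h | h
    · simp [hd, h, abs_of_neg h]
    · simp [hd, h]
    · simp [hd, not_lt.2 h.le, abs_of_pos h]
  have hsign : ∀ i, d i * Φ (fun j => |ν j|) i = Φ ν i := fun i => by
    rcases lt_trichotomy (ν i) 0 with h | h | h
    · rw [hext ν]; simp [hd, h, Real.sign_of_neg h]
    · have h0 : Φ (fun j => |ν j|) i = 0 := by
        rw [hext (fun j => |ν j|)]
        simp [h]
      rw [hext ν]; simp [h0, h]
    · rw [hext ν]; simp [hd, not_lt.2 h.le, Real.sign_of_pos h]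
  have hDν : Matrix.diagonal d * Matrix.diagonal (fun i => |ν i|) = Matrix.diagonal ν := by
    rw [Matrix.diagonal_mul_diagonal]; exact congrArg Matrix.diagonal (funext habs)
  have hDφ : Matrix.diagonal d * Matrix.diagonal (Φ (fun j => |ν j|)) =
      Matrix.diagonal (Φ ν) := by
    rw [Matrix.diagonal_mul_diagonal]; exact congrArg Matrix.diagonal (funext hsign)
  have hsvd : IsSVDsq (V' * Matrix.diagonal ν * U'ᵀ) (V' * Matrix.diagonal d)
      (fun i => |ν i|) U' := by
    refine ⟨?_, ?_, hU1, hU2, fun i => abs_nonneg _, ?_⟩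
    · rw [Matrix.transpose_mul, Matrix.diagonal_transpose, Matrix.mul_assoc,
        ← Matrix.mul_assoc V'ᵀ, hV1, Matrix.one_mul, hDD]
    · rw [Matrix.transpose_mul, Matrix.diagonal_transpose, Matrix.mul_assoc,
        ← Matrix.mul_assoc (Matrix.diagonal d), hDD, Matrix.one_mul, hV2]
    · rw [Matrix.mul_assoc V' (Matrix.diagonal d), hDν]
  rw [hF _ _ _ _ hsvd, Matrix.mul_assoc V' (Matrix.diagonal d), hDφ]

end MSFDaux
set_option maxHeartbeats 1000000 in
/-- Derivative of a matrix-valued spectral function `F(X) = V_X diag(Φ(Λ_X)) U_Xᵀ`,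
where `Φ` is symmetric and extended by `Φ(Λ) = sign(Λ) ⊙ Φ(|Λ|)`, at a square matrix
`X` with pairwise distinct singular values: `F` is differentiable at `X` if and only if
`Φ` is differentiable at `Λ_X`, in which case `∂F(X)[δ] = D(X)[δ]`. -/
theorem matrix_spectral_function_deriv {n : ℕ}
    (Φ : (Fin n → ℝ) → Fin n → ℝ)
    (hsym : ∀ (σ : Equiv.Perm (Fin n)) (Λ : Fin n → ℝ),
      Φ (fun i => Λ (σ i)) = fun i => Φ Λ (σ i))
    (hext : ∀ Λ : Fin n → ℝ, Φ Λ = fun i => Real.sign (Λ i) * Φ (fun j => |Λ j|) i)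
    (F : Matrix (Fin n) (Fin n) ℝ → Matrix (Fin n) (Fin n) ℝ)
    (hF : ∀ Z V' Λ' U', IsSVDsq Z V' Λ' U' → F Z = V' * Matrix.diagonal (Φ Λ') * U'ᵀ)
    (X V : Matrix (Fin n) (Fin n) ℝ) (Λ : Fin n → ℝ) (U : Matrix (Fin n) (Fin n) ℝ)
    (hSVD : IsSVDsq X V Λ U) (hdist : ∀ i j : Fin n, i ≠ j → Λ i ≠ Λ j) :
    (DifferentiableAt ℝ F X ↔ DifferentiableAt ℝ Φ Λ) ∧
      (DifferentiableAt ℝ Φ Λ →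
        ∀ δ : Matrix (Fin n) (Fin n) ℝ, fderiv ℝ F X δ = Dformula Φ V Λ U δ) := by
  classical
  open MSFDaux in
  obtain ⟨hV1, hV2, hU1, hU2, hΛ0, hXeq⟩ := hSVD
  have hmdiag : ∀ ν : Fin n → ℝ,
      F (V * Matrix.diagonal ν * Uᵀ) = V * Matrix.diagonal (Φ ν) * Uᵀ :=
    fun ν => MSFDaux.F_formula hext hF hV1 hV2 hU1 hU2 ν
  -- `Φ` is expressible through `F`
  have hrep : Φ = fun ν => MSFDaux.dvecL (Vᵀ * F (V * Matrix.diagonal ν * Uᵀ) * U) := by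
    funext ν
    rw [hmdiag ν]
    have h1 : Vᵀ * (V * Matrix.diagonal (Φ ν) * Uᵀ) * U = Matrix.diagonal (Φ ν) := by
      simp only [Matrix.mul_assoc, hU1, Matrix.mul_one]
      rw [← Matrix.mul_assoc, hV1, Matrix.one_mul]
    rw [h1]
    funext i
    rw [MSFDaux.dvecL_apply, Matrix.diagonal_apply_eq]
  set EE := MSFDaux.conjCLE V U hV1 hV2 hU1 hU2 with hEE
  have hEapp : ∀ M, (EE : Matrix (Fin n) (Fin n) ℝ →L[ℝ] Matrix (Fin n) (Fin n) ℝ) M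
      = V * M * Uᵀ := fun _ => rfl
  have hEsapp : ∀ M, (EE.symm : Matrix (Fin n) (Fin n) ℝ →L[ℝ] Matrix (Fin n) (Fin n) ℝ) M
      = Vᵀ * M * U := fun _ => rfl
  -- backward direction
  have hback : DifferentiableAt ℝ F X → DifferentiableAt ℝ Φ Λ := by
    intro hFd
    rw [hrep]
    have hin : DifferentiableAt ℝ (fun ν : Fin n → ℝ => V * Matrix.diagonal ν * Uᵀ) Λ := by
      have h := ((EE : Matrix (Fin n) (Fin n) ℝ →L[ℝ] Matrix (Fin n) (Fin n) ℝ).comp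
        MSFDaux.diagL).differentiableAt (x := Λ)
      exact h
    have hF' : DifferentiableAt ℝ F (V * Matrix.diagonal Λ * Uᵀ) := by
      rw [← hXeq]; exact hFd
    have h2 : DifferentiableAt ℝ (fun ν : Fin n → ℝ => F (V * Matrix.diagonal ν * Uᵀ)) Λ := by
      have h := hF'.comp Λ hin
      simp only [Function.comp_def] at h; exact h
    have hout : DifferentiableAt ℝ
        (fun Z : Matrix (Fin n) (Fin n) ℝ => MSFDaux.dvecL (Vᵀ * Z * U))
        (F (V * Matrix.diagonal Λ * Uᵀ)) := by
      have h := (MSFDaux.dvecL.comp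
        (EE.symm : Matrix (Fin n) (Fin n) ℝ →L[ℝ] Matrix (Fin n) (Fin n) ℝ)).differentiableAt
        (x := F (V * Matrix.diagonal Λ * Uᵀ))
      exact h
    have h3 := hout.comp Λ h2
    simpa [Function.comp_def] using h3
  -- derivative of Ψ at 0
  have hΨ0d := MSFDaux.hasFDerivAt_psiMap Λ (hasFDerivAt_id Λ)
  have hDid : MSFDaux.Dclean Λ (id Λ) (ContinuousLinearMap.id ℝ (Fin n → ℝ)) =
      ContinuousLinearMap.id ℝ (Matrix (Fin n) (Fin n) ℝ) := by
    refine ContinuousLinearMap.ext fun w => ?_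
    simp only [MSFDaux.Dclean_apply, ContinuousLinearMap.id_apply, id_eq]
    exact MSFDaux.inner_psi hdist hΛ0 w
  rw [hDid] at hΨ0d
  have hΨd : HasFDerivAt (fun Y => V * MSFDaux.PsiMap Λ id Y * Uᵀ)
      (EE : Matrix (Fin n) (Fin n) ℝ →L[ℝ] Matrix (Fin n) (Fin n) ℝ) 0 := by
    have h := ((EE : Matrix (Fin n) (Fin n) ℝ →L[ℝ] Matrix (Fin n) (Fin n) ℝ).hasFDerivAt
      (x := MSFDaux.PsiMap Λ id 0)).comp 0 hΨ0d
    exact h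
  have hΨcd : ContDiffAt ℝ (((⊤ : ℕ∞) : WithTop ℕ∞))
      (fun Y => V * MSFDaux.PsiMap Λ id Y * Uᵀ) 0 :=
    MSFDaux.contDiffAt_matmul
      (MSFDaux.contDiffAt_matmul contDiffAt_const (MSFDaux.contDiffAt_psiMap_id Λ))
      contDiffAt_const
  have hone : (1 : WithTop ℕ∞) ≤ ((⊤ : ℕ∞) : WithTop ℕ∞) := by
    exact_mod_cast (le_top : (1 : ℕ∞) ≤ ⊤)
  have hstrict : HasStrictFDerivAt (fun Y => V * MSFDaux.PsiMap Λ id Y * Uᵀ)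
      (EE : Matrix (Fin n) (Fin n) ℝ →L[ℝ] Matrix (Fin n) (Fin n) ℝ) 0 := by
    have h := hΨcd.hasStrictFDerivAt (ENat.one_le_iff_ne_zero_withTop.mp hone)
    exact h.congr_fderiv hΨd.fderiv
  set g := hstrict.localInverse (fun Y => V * MSFDaux.PsiMap Λ id Y * Uᵀ) EE 0 with hgdef
  have hΨ0X : V * MSFDaux.PsiMap Λ id 0 * Uᵀ = X := by
    rw [show MSFDaux.PsiMap Λ id 0 = Matrix.diagonal Λ from by
      simp [MSFDaux.PsiMap, MSFDaux.cay_zero, Matrix.transpose_one]]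
    exact hXeq.symm
  have hgX : g X = 0 := by rw [← hΨ0X]; exact hstrict.localInverse_apply_image
  have hgd : HasStrictFDerivAt g
      (EE.symm : Matrix (Fin n) (Fin n) ℝ →L[ℝ] Matrix (Fin n) (Fin n) ℝ) X := by
    have h := hstrict.to_localInverse
    beta_reduce at h
    rwa [hΨ0X] at h
  have hright : ∀ᶠ z in nhds X, (fun Y => V * MSFDaux.PsiMap Λ id Y * Uᵀ) (g z) = z := by
    have h := hstrict.eventually_right_inverse
    beta_reduce at h
    rwa [hΨ0X] at h
  -- F ∘ Ψ = G
  have hFsvd : ∀ Y, F (V * MSFDaux.PsiMap Λ id Y * Uᵀ) = V * MSFDaux.PsiMap Λ Φ Y * Uᵀ := by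
    intro Y
    have horA := MSFDaux.cay_orth (MSFDaux.amatL_skew Λ Y)
    have horB := MSFDaux.cay_orth (MSFDaux.bmatL_skew Λ Y)
    have hV'1 : (V * MSFDaux.cay (MSFDaux.amatL Λ Y))ᵀ * (V * MSFDaux.cay (MSFDaux.amatL Λ Y))
        = 1 := by
      rw [Matrix.transpose_mul, Matrix.mul_assoc, ← Matrix.mul_assoc Vᵀ, hV1, Matrix.one_mul,
        horA.1]
    have hV'2 : (V * MSFDaux.cay (MSFDaux.amatL Λ Y)) * (V * MSFDaux.cay (MSFDaux.amatL Λ Y))ᵀ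
        = 1 := by
      rw [Matrix.transpose_mul, Matrix.mul_assoc,
        ← Matrix.mul_assoc (MSFDaux.cay (MSFDaux.amatL Λ Y)), horA.2, Matrix.one_mul, hV2]
    have hU'1 : (U * MSFDaux.cay (MSFDaux.bmatL Λ Y))ᵀ * (U * MSFDaux.cay (MSFDaux.bmatL Λ Y))
        = 1 := by
      rw [Matrix.transpose_mul, Matrix.mul_assoc, ← Matrix.mul_assoc Uᵀ, hU1, Matrix.one_mul,
        horB.1]
    have hU'2 : (U * MSFDaux.cay (MSFDaux.bmatL Λ Y)) * (U * MSFDaux.cay (MSFDaux.bmatL Λ Y))ᵀ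
        = 1 := by
      rw [Matrix.transpose_mul, Matrix.mul_assoc,
        ← Matrix.mul_assoc (MSFDaux.cay (MSFDaux.bmatL Λ Y)), horB.2, Matrix.one_mul, hU2]
    have h := MSFDaux.F_formula hext hF hV'1 hV'2 hU'1 hU'2 (Λ + MSFDaux.dvecL Y)
    have e1 : V * MSFDaux.PsiMap Λ id Y * Uᵀ =
        (V * MSFDaux.cay (MSFDaux.amatL Λ Y)) * Matrix.diagonal (Λ + MSFDaux.dvecL Y) *
          (U * MSFDaux.cay (MSFDaux.bmatL Λ Y))ᵀ := by
      simp [MSFDaux.PsiMap, Matrix.transpose_mul, Matrix.mul_assoc]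
    have e2 : V * MSFDaux.PsiMap Λ Φ Y * Uᵀ =
        (V * MSFDaux.cay (MSFDaux.amatL Λ Y)) * Matrix.diagonal (Φ (Λ + MSFDaux.dvecL Y)) *
          (U * MSFDaux.cay (MSFDaux.bmatL Λ Y))ᵀ := by
      simp [MSFDaux.PsiMap, Matrix.transpose_mul, Matrix.mul_assoc]
    rw [e1, e2, h]
  have hFG : F =ᶠ[nhds X] fun z => V * MSFDaux.PsiMap Λ Φ (g z) * Uᵀ := by
    filter_upwards [hright] with z hz
    conv_lhs => rw [← hz]
    exact hFsvd (g z)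
  -- main forward statement
  have main : DifferentiableAt ℝ Φ Λ →
      DifferentiableAt ℝ F X ∧
        ∀ δ : Matrix (Fin n) (Fin n) ℝ, fderiv ℝ F X δ = Dformula Φ V Λ U δ := by
    intro hΦ
    have hG0d : HasFDerivAt (MSFDaux.PsiMap Λ Φ)
        (MSFDaux.Dclean Λ (Φ Λ) (fderiv ℝ Φ Λ)) 0 :=
      MSFDaux.hasFDerivAt_psiMap Λ hΦ.hasFDerivAt
    have hGd : HasFDerivAt (fun Y => V * MSFDaux.PsiMap Λ Φ Y * Uᵀ)
        ((EE : Matrix (Fin n) (Fin n) ℝ →L[ℝ] Matrix (Fin n) (Fin n) ℝ).comp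
          (MSFDaux.Dclean Λ (Φ Λ) (fderiv ℝ Φ Λ))) 0 := by
      have h := ((EE : Matrix (Fin n) (Fin n) ℝ →L[ℝ] Matrix (Fin n) (Fin n) ℝ).hasFDerivAt
        (x := MSFDaux.PsiMap Λ Φ 0)).comp 0 hG0d
      exact h
    have hcomp : HasFDerivAt (fun z => V * MSFDaux.PsiMap Λ Φ (g z) * Uᵀ)
        (((EE : Matrix (Fin n) (Fin n) ℝ →L[ℝ] Matrix (Fin n) (Fin n) ℝ).comp
            (MSFDaux.Dclean Λ (Φ Λ) (fderiv ℝ Φ Λ))).comp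
          (EE.symm : Matrix (Fin n) (Fin n) ℝ →L[ℝ] Matrix (Fin n) (Fin n) ℝ)) X := by
      have h0 : HasFDerivAt (fun Y => V * MSFDaux.PsiMap Λ Φ Y * Uᵀ)
          ((EE : Matrix (Fin n) (Fin n) ℝ →L[ℝ] Matrix (Fin n) (Fin n) ℝ).comp
            (MSFDaux.Dclean Λ (Φ Λ) (fderiv ℝ Φ Λ))) (g X) := by
        rw [hgX]; exact hGd
      have h := h0.comp X hgd.hasFDerivAt
      exact h
    refine ⟨hFG.differentiableAt_iff.2 hcomp.differentiableAt, fun δ => ?_⟩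
    have hfd : fderiv ℝ F X =
        ((EE : Matrix (Fin n) (Fin n) ℝ →L[ℝ] Matrix (Fin n) (Fin n) ℝ).comp
            (MSFDaux.Dclean Λ (Φ Λ) (fderiv ℝ Φ Λ))).comp
          (EE.symm : Matrix (Fin n) (Fin n) ℝ →L[ℝ] Matrix (Fin n) (Fin n) ℝ) := by
      rw [hFG.fderiv_eq]
      exact hcomp.fderiv
    rw [hfd, ContinuousLinearMap.comp_apply, ContinuousLinearMap.comp_apply, hEsapp, hEapp,
      MSFDaux.Dclean_apply,
      MSFDaux.inner_G hdist hΛ0 Φ (fderiv ℝ Φ Λ (MSFDaux.dvecL (Vᵀ * δ * U))) (Vᵀ * δ * U)]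
    rfl
  exact ⟨⟨hback, fun h => (main h).1⟩, fun h => (main h).2⟩
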